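/- Let 𝒯 be a generalized k-forest on v vertices. Then every k-uniform hypergraph on n vertices containing no copy of 𝒯 has at most (v − k)·C(n, k−1) edges; that is, ex_k(n, 𝒯) ≤ (v − k)·C(n, k−1). -/

import Mathlib

/-- A generalized `k`-forest, presented as a list of edges together with the list of
defining sets: a single `k`-edge is a `k`-forest; one may add a new edge `A ∪ B` where
`A` is contained in some existing edge and `B` is disjoint from the current vertex set,
with `|A| + |B| = k`. -/
inductive KForest {α : Type*} [DecidableEq α] (k : ℕ) :
    List (Finset α) → List (Finset α) → Prop
  | single (E : Finset α) (hE : E.card = k) : KForest k [E] []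
  | extend {l As : List (Finset α)} (h : KForest k l As) (A B E : Finset α)
      (hE : E ∈ l) (hA : A ⊆ E) (hB : ∀ F ∈ l, Disjoint B F)
      (hcard : A.card + B.card = k) : KForest k (l ++ [A ∪ B]) (As ++ [A])

/-- The vertex set of a family of edges. -/
def vset {α : Type*} [DecidableEq α] (l : List (Finset α)) : Finset α :=
  l.foldr (· ∪ ·) ∅

/-- A family of edges is connected (as a hypergraph) if any two of its edges are linked by
a chain of pairwise intersecting edges of the family. -/
def HyperConnected {α : Type*} [DecidableEq α] (l : List (Finset α)) : Prop :=
  ∀ E ∈ l, ∀ F ∈ l,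
    Relation.ReflTransGen (fun X Y => X ∈ l ∧ Y ∈ l ∧ (X ∩ Y).Nonempty) E F

section Aux

variable {α : Type*} [DecidableEq α]

lemma vset_nil : vset ([] : List (Finset α)) = ∅ := rfl

lemma vset_cons (a : Finset α) (l : List (Finset α)) : vset (a :: l) = a ∪ vset l := rfl

lemma vset_append (l m : List (Finset α)) : vset (l ++ m) = vset l ∪ vset m := by
  induction l with
  | nil => simp [vset_nil, vset_cons]
  | cons a l ih => simp [vset_cons, ih, Finset.union_assoc]

lemma subset_vset {E : Finset α} {l : List (Finset α)} (h : E ∈ l) : E ⊆ vset l := by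
  induction l with
  | nil => simp at h
  | cons a l ih =>
    rw [vset_cons]
    rcases List.mem_cons.1 h with h | h
    · exact h ▸ Finset.subset_union_left
    · exact (ih h).trans Finset.subset_union_right

lemma disjoint_vset {B : Finset α} {l : List (Finset α)}
    (h : ∀ F ∈ l, Disjoint B F) : Disjoint B (vset l) := by
  induction l with
  | nil => simp [vset_nil]
  | cons a l ih =>
    rw [vset_cons, Finset.disjoint_union_right]
    exact ⟨h a (List.mem_cons_self), ih fun F hF => h F (List.mem_cons_of_mem a hF)⟩

/-- The walk lemma: in a cleaned hypergraph, a set `A'` lying in an edge can be completed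
by `b` vertices avoiding a forbidden set `S` to form an edge. -/
lemma walk {k v : ℕ} (H' : Finset (Finset ℕ))
    (hcard : ∀ F ∈ H', F.card = k)
    (hdeg : ∀ D F, F ∈ H' → D ⊆ F → D.card = k - 1 →
      v - k + 1 ≤ (H'.filter (fun G => D ⊆ G)).card) :
    ∀ b (A' S F₀ : Finset ℕ), F₀ ∈ H' → A' ⊆ F₀ → A' ⊆ S →
      A'.card + b = k → S.card + b ≤ v →
      ∃ T : Finset ℕ, T.card = b ∧ Disjoint T S ∧ A' ∪ T ∈ H' := by
  intro b
  induction b with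
  | zero =>
    intro A' S F₀ hF₀ hAF hAS hak hsv
    refine ⟨∅, by simp, by simp, ?_⟩
    have : A' = F₀ := Finset.eq_of_subset_of_card_le hAF (by rw [hcard F₀ hF₀]; omega)
    simpa [this] using hF₀
  | succ b ih =>
    intro A' S F₀ hF₀ hAF hAS hak hsv
    have hk1 : 1 ≤ k := by omega
    have hF₀c : F₀.card = k := hcard F₀ hF₀
    obtain ⟨D, hAD, hDF, hDc⟩ :=
      Finset.exists_subsuperset_card_eq hAF (n := k - 1) (by omega) (by omega)
    have hX := hdeg D F₀ hF₀ hDF hDc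
    set X := H'.filter (fun G => D ⊆ G) with hXdef
    have hXone : ∀ F ∈ X, (F \ D).card = 1 := by
      intro F hF
      rw [Finset.mem_filter] at hF
      rw [Finset.card_sdiff_of_subset hF.2, hcard F hF.1, hDc]
      omega
    classical
    set g : Finset ℕ → ℕ := fun F => if h : (F \ D).Nonempty then (F \ D).min' h else 0
      with hgdef
    have hgF : ∀ F ∈ X, F \ D = {g F} := by
      intro F hF
      obtain ⟨x, hx⟩ := Finset.card_eq_one.1 (hXone F hF)
      have hne : (F \ D).Nonempty := by rw [hx]; exact Finset.singleton_nonempty x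
      have hgval : g F = (F \ D).min' hne := by simp only [hgdef, dif_pos hne]
      have hmem : (F \ D).min' hne ∈ F \ D := Finset.min'_mem _ _
      have hgmem : g F ∈ F \ D := by rw [hgval]; exact hmem
      have hall : ∀ y ∈ F \ D, y = x := by
        intro y hy
        rw [hx] at hy
        exact Finset.mem_singleton.1 hy
      rw [hx, hall (g F) hgmem]
    have hFD : ∀ F ∈ X, F = D ∪ {g F} := by
      intro F hF
      rw [← hgF F hF]
      exact (Finset.union_sdiff_of_subset (Finset.mem_filter.1 hF).2).symm
    have hginj : Set.InjOn g ↑X := by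
      intro F hF G hG hfg
      simp only [Finset.mem_coe] at hF hG
      rw [hFD F hF, hFD G hG, hfg]
    have hextc : (X.image g).card = X.card := Finset.card_image_of_injOn hginj
    have hgnotD : ∀ F ∈ X, g F ∉ D := by
      intro F hF
      have hmem : g F ∈ F \ D := by rw [hgF F hF]; exact Finset.mem_singleton_self _
      exact (Finset.mem_sdiff.1 hmem).2
    have hSD : ((X.image g) ∩ S).card ≤ v - k := by
      have h1 : (X.image g) ∩ S ⊆ S \ A' := by
        intro x hx
        rw [Finset.mem_inter] at hx
        obtain ⟨F, hF, hgFx⟩ := Finset.mem_image.1 hx.1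
        rw [Finset.mem_sdiff]
        refine ⟨hx.2, fun hxa => ?_⟩
        exact hgnotD F hF (hgFx ▸ hAD hxa)
      have h2 : (S \ A').card = S.card - A'.card := Finset.card_sdiff_of_subset hAS
      have h3 := Finset.card_le_card h1
      omega
    have hsplit := Finset.card_inter_add_card_sdiff (X.image g) S
    have hnecand : ((X.image g) \ S).Nonempty := by
      rw [← Finset.card_pos]
      omega
    obtain ⟨x, hx⟩ := hnecand
    rw [Finset.mem_sdiff] at hx
    obtain ⟨F, hFX, hgFx⟩ := Finset.mem_image.1 hx.1
    have hxS : x ∉ S := hx.2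
    have hFH : F ∈ H' := (Finset.mem_filter.1 hFX).1
    have hDsubF : D ⊆ F := (Finset.mem_filter.1 hFX).2
    have hxF : x ∈ F := by
      have hmem : g F ∈ F \ D := by rw [hgF F hFX]; exact Finset.mem_singleton_self _
      exact hgFx ▸ (Finset.mem_sdiff.1 hmem).1
    have hxA : x ∉ A' := fun h => hxS (hAS h)
    obtain ⟨T', hT'c, hT'd, hT'm⟩ :=
      ih (A' ∪ {x}) (S ∪ {x}) F hFH
        (Finset.union_subset (hAD.trans hDsubF) (by simpa using hxF))
        (Finset.union_subset_union hAS (Finset.Subset.refl _))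
        (by rw [Finset.card_union_of_disjoint (by simpa using hxA)]; simp; omega)
        (by rw [Finset.card_union_of_disjoint (by simpa using hxS)]; simp; omega)
    have hxT' : x ∉ T' := by
      intro hmem
      exact (Finset.disjoint_left.1 hT'd) hmem (by simp)
    refine ⟨insert x T', ?_, ?_, ?_⟩
    · rw [Finset.card_insert_of_notMem hxT', hT'c]
    · rw [Finset.disjoint_left]
      intro a ha
      rcases Finset.mem_insert.1 ha with rfl | ha
      · exact hxS
      · intro haS
        exact (Finset.disjoint_left.1 hT'd) ha (Finset.mem_union_left _ haS)
    · have heq : A' ∪ insert x T' = (A' ∪ {x}) ∪ T' := by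
        ext a
        simp only [Finset.mem_insert, Finset.mem_union, Finset.mem_singleton]
        tauto
      rw [heq]
      exact hT'm

/-- Greedy embedding of a forest into a cleaned hypergraph. -/
lemma greedy {k v : ℕ} (H' : Finset (Finset ℕ)) (hne : H'.Nonempty)
    (hcard : ∀ F ∈ H', F.card = k)
    (hdeg : ∀ D F, F ∈ H' → D ⊆ F → D.card = k - 1 →
      v - k + 1 ≤ (H'.filter (fun G => D ⊆ G)).card)
    {l As : List (Finset α)} (h : KForest k l As) :
    (vset l).card ≤ v →
    ∃ f : α → ℕ, Set.InjOn f ↑(vset l) ∧ ∀ E ∈ l, E.image f ∈ H' := by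
  induction h with
  | single E hE =>
    intro _
    obtain ⟨F, hF⟩ := hne
    have hcards : E.card = F.card := by rw [hE, hcard F hF]
    have e := Finset.equivOfCardEq hcards
    classical
    have hvE : vset [E] = E := by rw [vset_cons, vset_nil, Finset.union_empty]
    set f : α → ℕ := fun x => if h : x ∈ E then (e ⟨x, h⟩ : ℕ) else 0 with hfdef
    have hinj : Set.InjOn f ↑E := by
      intro x hx y hy hxy
      simp only [Finset.mem_coe] at hx hy
      simp only [hfdef, dif_pos hx, dif_pos hy] at hxy
      exact Subtype.ext_iff.1 (e.injective (Subtype.ext hxy))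
    refine ⟨f, by rw [hvE]; exact hinj, ?_⟩
    intro E' hE'
    have hEE : E' = E := by simpa using hE'
    subst hEE
    have himg : E'.image f = F := by
      apply Finset.eq_of_subset_of_card_le
      · intro y hy
        obtain ⟨x, hx, hxy⟩ := Finset.mem_image.1 hy
        rw [hfdef] at hxy
        simp only [dif_pos hx] at hxy
        exact hxy ▸ (e ⟨x, hx⟩).2
      · rw [Finset.card_image_of_injOn hinj, ← hcards]
    rw [himg]
    exact hF
  | @extend l' As' hfor A B E hE hA hB hcardAB ih =>
    intro hvle
    have hAv : A ⊆ vset l' := hA.trans (subset_vset hE)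
    have hdisj : Disjoint B (vset l') := disjoint_vset hB
    have hvs : vset (l' ++ [A ∪ B]) = vset l' ∪ B := by
      rw [vset_append, vset_cons, vset_nil, Finset.union_empty, ← Finset.union_assoc,
        Finset.union_eq_left.mpr hAv]
    rw [hvs] at hvle ⊢
    have hcardU : (vset l' ∪ B).card = (vset l').card + B.card :=
      Finset.card_union_of_disjoint hdisj.symm
    obtain ⟨f, hfinj, hfedges⟩ := ih (by omega)
    set S := (vset l').image f with hSdef
    have hScard : S.card = (vset l').card := Finset.card_image_of_injOn hfinj
    have hAinj : Set.InjOn f ↑A := hfinj.mono (by exact_mod_cast hAv)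
    have hA'c : (A.image f).card = A.card := Finset.card_image_of_injOn hAinj
    have hA'S : A.image f ⊆ S := Finset.image_subset_image hAv
    have hA'F : A.image f ⊆ E.image f := Finset.image_subset_image hA
    obtain ⟨T, hTc, hTS, hTm⟩ := walk H' hcard hdeg B.card (A.image f) S (E.image f)
      (hfedges E hE) hA'F hA'S (by rw [hA'c]; exact hcardAB) (by omega)
    have e := Finset.equivOfCardEq (show B.card = T.card from hTc.symm)
    classical
    set f' : α → ℕ := fun x => if h : x ∈ B then (e ⟨x, h⟩ : ℕ) else f x with hf'def
    have hf'on : ∀ x ∈ vset l', f' x = f x := by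
      intro x hx
      have hxB : x ∉ B := fun hxB => Finset.disjoint_left.1 hdisj hxB hx
      simp [hf'def, hxB]
    have hf'B : ∀ x (hx : x ∈ B), f' x = (e ⟨x, hx⟩ : ℕ) := by
      intro x hx
      simp [hf'def, hx]
    have himgB : B.image f' = T := by
      apply Finset.eq_of_subset_of_card_le
      · intro y hy
        obtain ⟨x, hx, hxy⟩ := Finset.mem_image.1 hy
        rw [hf'B x hx] at hxy
        exact hxy ▸ (e ⟨x, hx⟩).2
      · have hinjB : Set.InjOn f' ↑B := by
          intro x hx y hy hxy
          simp only [Finset.mem_coe] at hx hy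
          rw [hf'B x hx, hf'B y hy] at hxy
          exact Subtype.ext_iff.1 (e.injective (Subtype.ext hxy))
        rw [Finset.card_image_of_injOn hinjB, hTc]
    have himgl : ∀ E' ∈ l', E'.image f' = E'.image f :=
      fun E' hE' => Finset.image_congr (fun x hx => hf'on x (subset_vset hE' hx))
    have himgS : (vset l').image f' = S := by
      rw [hSdef]
      exact Finset.image_congr (fun x hx => hf'on x hx)
    refine ⟨f', ?_, ?_⟩
    · intro x hx y hy hxy
      rw [Finset.coe_union, Set.mem_union] at hx hy
      have memS : ∀ z, z ∈ (vset l' : Set α) → f' z ∈ S := by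
        intro z hz
        rw [← himgS]
        exact Finset.mem_image_of_mem f' hz
      have memT : ∀ z, z ∈ (B : Set α) → f' z ∈ T := by
        intro z hz
        rw [← himgB]
        exact Finset.mem_image_of_mem f' hz
      rcases hx with hx | hx <;> rcases hy with hy | hy
      · have hx' := hf'on x hx
        have hy' := hf'on y hy
        rw [hx', hy'] at hxy
        exact hfinj hx hy hxy
      · exact absurd (hxy ▸ memS x hx) (Finset.disjoint_left.1 hTS (memT y hy))
      · exact absurd (memS y hy) (Finset.disjoint_left.1 hTS (hxy ▸ memT x hx))
      · have hx' := hf'B x hx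
        have hy' := hf'B y hy
        rw [hx', hy'] at hxy
        exact Subtype.ext_iff.1 (e.injective (Subtype.ext hxy))
    · intro E' hE'
      rcases List.mem_append.1 hE' with h' | h'
      · rw [himgl E' h']
        exact hfedges E' h'
      · have hEAB : E' = A ∪ B := by simpa using h'
        subst hEAB
        have himgAB : (A ∪ B).image f' = A.image f ∪ T := by
          rw [Finset.image_union, himgB]
          congr 1
          exact Finset.image_congr (fun x hx => hf'on x (hAv hx))
        rw [himgAB]
        exact hTm

/-- The cleaning lemma: any hypergraph with more than `(v-k)` times its `(k-1)`-shadow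
many edges contains a nonempty subgraph in which every present `(k-1)`-set has degree
at least `v-k+1`. -/
lemma clean (k v : ℕ) (V : Finset ℕ) (H : Finset (Finset ℕ)) :
    (∀ F ∈ H, F ⊆ V) →
    (v - k) * ((V.powersetCard (k-1)).filter (fun D => ∃ F ∈ H, D ⊆ F)).card < H.card →
    ∃ H' ⊆ H, H'.Nonempty ∧ ∀ D F, F ∈ H' → D ⊆ F → D.card = k - 1 →
      v - k + 1 ≤ (H'.filter (fun G => D ⊆ G)).card := by
  classical
  induction H using Finset.strongInductionOn with
  | _ H IH =>
  intro hsub hbig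
  by_cases hgood : ∀ D F, F ∈ H → D ⊆ F → D.card = k - 1 →
      v - k + 1 ≤ (H.filter (fun G => D ⊆ G)).card
  · refine ⟨H, Finset.Subset.refl _, Finset.card_pos.1 (by omega), hgood⟩
  · push_neg at hgood
    obtain ⟨D, F, hFH, hDF, hDc, hdegD⟩ := hgood
    set H₁ := H.filter (fun G => ¬ D ⊆ G) with hH₁def
    have hssub : H₁ ⊂ H := Finset.filter_ssubset.2 ⟨F, hFH, by simp [hDF]⟩
    have hDsh : D ∈ (V.powersetCard (k-1)).filter (fun D' => ∃ F ∈ H, D' ⊆ F) := by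
      rw [Finset.mem_filter, Finset.mem_powersetCard]
      exact ⟨⟨hDF.trans (hsub F hFH), hDc⟩, F, hFH, hDF⟩
    have hshsub : (V.powersetCard (k-1)).filter (fun D' => ∃ F ∈ H₁, D' ⊆ F) ⊆
        ((V.powersetCard (k-1)).filter (fun D' => ∃ F ∈ H, D' ⊆ F)).erase D := by
      intro D' hD'
      rw [Finset.mem_filter] at hD'
      obtain ⟨hpw, F', hF', hD'F'⟩ := hD'
      rw [Finset.mem_erase, Finset.mem_filter]
      have hF'H : F' ∈ H := Finset.filter_subset _ _ hF'
      refine ⟨fun hDD => ?_, hpw, F', hF'H, hD'F'⟩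
      subst hDD
      exact (Finset.mem_filter.1 hF').2 hD'F'
    set s := ((V.powersetCard (k-1)).filter (fun D' => ∃ F ∈ H, D' ⊆ F)).card with hs
    set s₁ := ((V.powersetCard (k-1)).filter (fun D' => ∃ F ∈ H₁, D' ⊆ F)).card with hs₁
    have hs1 : s₁ + 1 ≤ s := by
      have h1 : s₁ ≤ (((V.powersetCard (k-1)).filter
          (fun D' => ∃ F ∈ H, D' ⊆ F)).erase D).card := Finset.card_le_card hshsub
      have h2 := Finset.card_erase_add_one hDsh
      omega
    have hpart : H₁.card + (H.filter (fun G => D ⊆ G)).card = H.card := by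
      rw [hH₁def, add_comm]
      exact Finset.card_filter_add_card_filter_not _
    have hmul : (v-k) * s₁ + (v-k) ≤ (v-k) * s := by
      calc (v-k) * s₁ + (v-k) = (v-k) * (s₁+1) := by ring
        _ ≤ (v-k) * s := Nat.mul_le_mul_left _ hs1
    have hbig₁ : (v-k) * s₁ < H₁.card := by omega
    obtain ⟨H', hH'sub, hne, hprop⟩ :=
      IH H₁ hssub (fun F hF => hsub F (Finset.filter_subset _ _ hF)) hbig₁
    exact ⟨H', hH'sub.trans (Finset.filter_subset _ _), hne, hprop⟩

end Aux

/-- If `𝒯` is a generalized `k`-forest on `v` vertices, then every `k`-uniform hypergraph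
on `n` vertices containing no copy of `𝒯` has at most `(v-k)·C(n,k-1)` edges. -/
theorem stmt_7 {α : Type*} [DecidableEq α] (k n v : ℕ)
    (l As : List (Finset α)) (h : KForest k l As) (hv : (vset l).card = v)
    (V : Finset ℕ) (hV : V.card = n)
    (H : Finset (Finset ℕ)) (hH : ∀ F ∈ H, F ⊆ V ∧ F.card = k)
    (hfree : ¬ ∃ f : α → ℕ, Set.InjOn f ↑(vset l) ∧ ∀ E ∈ l, E.image f ∈ H) :
    H.card ≤ (v - k) * Nat.choose n (k - 1) := by
  classical
  by_contra hcon
  push_neg at hcon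
  have hsubV : ∀ F ∈ H, F ⊆ V := fun F hF => (hH F hF).1
  have hshcard : ((V.powersetCard (k-1)).filter (fun D => ∃ F ∈ H, D ⊆ F)).card ≤
      n.choose (k-1) := by
    calc _ ≤ (V.powersetCard (k-1)).card := Finset.card_le_card (Finset.filter_subset _ _)
      _ = n.choose (k-1) := by rw [Finset.card_powersetCard, hV]
  have hbig : (v-k) * ((V.powersetCard (k-1)).filter (fun D => ∃ F ∈ H, D ⊆ F)).card <
      H.card := lt_of_le_of_lt (Nat.mul_le_mul_left _ hshcard) hcon
  obtain ⟨H', hsub, hne, hdeg⟩ := clean k v V H hsubV hbig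
  have hcardH' : ∀ F ∈ H', F.card = k := fun F hF => (hH F (hsub hF)).2
  obtain ⟨f, hfinj, hedges⟩ := greedy H' hne hcardH' hdeg h hv.le
  exact hfree ⟨f, hfinj, fun E hE => hsub (hedges E hE)⟩
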